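/- Let T be a dense triplet set. An SN-set S of T is a CandidateTBR SN-set (i.e., T|S is consistent with some phylogenetic tree) if and only if either |S| = 1, or S has exactly two maximal proper SN-subsets (the SN-sets of T|S maximal under the restriction of being nontrivial subsets of S), and both of them are CandidateTBR SN-sets. -/

import Mathlib

/-!
Common definitions for formalizing "Constructing the Simplest Possible
Phylogenetic Network from Triplets" (van Iersel, Kelk).

A directed graph on a vertex type `V` is given by its arc set `A : Set (V × V)`.
-/

namespace Phylo

variable {V L : Type}

/-- In-degree of a vertex. -/
noncomputable def indeg (A : Set (V × V)) (v : V) : ℕ := {u | (u, v) ∈ A}.ncard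

/-- Out-degree of a vertex. -/
noncomputable def outdeg (A : Set (V × V)) (v : V) : ℕ := {w | (v, w) ∈ A}.ncard

/-- The root: indegree 0 and outdegree 2. -/
def IsRoot (A : Set (V × V)) (v : V) : Prop := indeg A v = 0 ∧ outdeg A v = 2

/-- A split vertex: indegree 1 and outdegree 2. -/
def IsSplit (A : Set (V × V)) (v : V) : Prop := indeg A v = 1 ∧ outdeg A v = 2

/-- A reticulation vertex: indegree 2 and outdegree 1. -/
def IsRetic (A : Set (V × V)) (v : V) : Prop := indeg A v = 2 ∧ outdeg A v = 1

/-- A leaf vertex: indegree 1 and outdegree 0. -/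
def IsLeafV (A : Set (V × V)) (v : V) : Prop := indeg A v = 1 ∧ outdeg A v = 0

/-- Directed reachability (reflexive-transitive closure of the arc relation). -/
def Reaches (A : Set (V × V)) : V → V → Prop :=
  Relation.ReflTransGen fun u v => (u, v) ∈ A

/-- A directed graph is acyclic if it has no directed cycle. -/
def Acyclic (A : Set (V × V)) : Prop := ∀ u v, (u, v) ∈ A → ¬ Reaches A v u

/-- Adjacency in the underlying undirected graph. -/
def UAdj (A : Set (V × V)) (u v : V) : Prop := (u, v) ∈ A ∨ (v, u) ∈ A

/-- The underlying undirected graph is connected (on all of `V`). -/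
def ConnectedGraph (A : Set (V × V)) : Prop :=
  ∀ u v : V, Relation.ReflTransGen (UAdj A) u v

/-- Undirected connectivity within a set `S` of vertices (in the induced subgraph). -/
def ConnWithin (A : Set (V × V)) (S : Set V) : Prop :=
  ∀ u ∈ S, ∀ v ∈ S, Relation.ReflTransGen (fun a b => a ∈ S ∧ b ∈ S ∧ UAdj A a b) u v

/-- A set of at least two vertices inducing a biconnected subgraph: it is connected
and stays connected after removal of any single vertex. -/
def Biconnected (A : Set (V × V)) (S : Set V) : Prop :=
  2 ≤ S.ncard ∧ ConnWithin A S ∧ ∀ w ∈ S, ConnWithin A (S \ {w})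

/-- A biconnected component: a maximal biconnected subgraph. -/
def BiconnComp (A : Set (V × V)) (S : Set V) : Prop :=
  Biconnected A S ∧ ∀ S', Biconnected A S' → S ⊆ S' → S' = S

/-- The arcs leaving a set of vertices. -/
def outArcs (A : Set (V × V)) (S : Set V) : Set (V × V) :=
  {a ∈ A | a.1 ∈ S ∧ a.2 ∉ S}

/-- A phylogenetic network on the (finite) vertex type `V` with leaves labelled by
elements of `L`: a directed acyclic graph with exactly one vertex of indegree 0
and outdegree 2 (the root), all other vertices being split vertices, reticulation
vertices or leaves; leaves are distinctly labelled.  Moreover (to avoid redundant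
networks) every nontrivial biconnected component has at least three outgoing arcs. -/
structure PhyloNetwork (V L : Type) : Type where
  vfin : Finite V
  arcs : Set (V × V)
  lab : V → L
  acyclic : Acyclic arcs
  root_ex : ∃ r, IsRoot arcs r
  root_unique : ∀ r r', IsRoot arcs r → IsRoot arcs r' → r = r'
  vertex_type : ∀ v, IsRoot arcs v ∨ IsSplit arcs v ∨ IsRetic arcs v ∨ IsLeafV arcs v
  lab_inj : ∀ u v, IsLeafV arcs u → IsLeafV arcs v → lab u = lab v → u = v
  bicomp_out : ∀ S, BiconnComp arcs S → S.ncard ≠ 2 → 3 ≤ (outArcs arcs S).ncard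

/-- The set of leaf labels of a network. -/
def leafSet (N : PhyloNetwork V L) : Set L := {x | ∃ v, IsLeafV N.arcs v ∧ N.lab v = x}

/-- A directed path, as a nonempty list of distinct vertices consecutively joined by arcs. -/
def IsPath (A : Set (V × V)) (l : List V) : Prop :=
  l ≠ [] ∧ l.Nodup ∧ l.Chain' fun a b => (a, b) ∈ A

/-- A directed path from `u` to `v`. -/
def IsPathFromTo (A : Set (V × V)) (l : List V) (u v : V) : Prop :=
  IsPath A l ∧ l.head? = some u ∧ l.getLast? = some v

/-- `w` is an endpoint of the path `l`. -/
def IsEndpoint (l : List V) (w : V) : Prop := l.head? = some w ∨ l.getLast? = some w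

/-- Two paths are internally vertex-disjoint: any common vertex is an endpoint of both. -/
def IntDisjoint (p q : List V) : Prop :=
  ∀ w, w ∈ p → w ∈ q → IsEndpoint p w ∧ IsEndpoint q w

/-- An embedding of the triplet `xy|z` with summit `p` and cherry vertex `q`:
pairwise internally vertex-disjoint directed paths `q→x`, `q→y`, `p→q`, `p→z`. -/
def HasEmbedding (A : Set (V × V)) (p q x y z : V) : Prop :=
  p ≠ q ∧ ∃ Pqx Pqy Ppq Ppz : List V,
    IsPathFromTo A Pqx q x ∧ IsPathFromTo A Pqy q y ∧
    IsPathFromTo A Ppq p q ∧ IsPathFromTo A Ppz p z ∧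
    IntDisjoint Pqx Pqy ∧ IntDisjoint Pqx Ppq ∧ IntDisjoint Pqx Ppz ∧
    IntDisjoint Pqy Ppq ∧ IntDisjoint Pqy Ppz ∧ IntDisjoint Ppq Ppz

/-- The triplet `xy|z` (on leaf labels) is consistent with the network `N`. -/
def ConsistentT (N : PhyloNetwork V L) (x y z : L) : Prop :=
  ∃ a b c : V, IsLeafV N.arcs a ∧ IsLeafV N.arcs b ∧ IsLeafV N.arcs c ∧
    N.lab a = x ∧ N.lab b = y ∧ N.lab c = z ∧ a ≠ b ∧ a ≠ c ∧ b ≠ c ∧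
    ∃ p q, HasEmbedding N.arcs p q a b c

/-- `T(N)`: the set of all triplets consistent with `N`
(the triple `(x,y,z)` codes the triplet `xy|z`). -/
def TN (N : PhyloNetwork V L) : Set (L × L × L) := {t | ConsistentT N t.1 t.2.1 t.2.2}

/-- `N` is consistent with every triplet in `T`. -/
def ConsistentSet (N : PhyloNetwork V L) (T : Set (L × L × L)) : Prop :=
  ∀ t ∈ T, ConsistentT N t.1 t.2.1 t.2.2

/-- `N` reflects `T` if `T(N) = T`. -/
def Reflects (N : PhyloNetwork V L) (T : Set (L × L × L)) : Prop := TN N = T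

/-- `L(T)`: the set of leaves occurring in a triplet set. -/
def tripletLeaves (T : Set (L × L × L)) : Set L :=
  {x | ∃ t ∈ T, x = t.1 ∨ x = t.2.1 ∨ x = t.2.2}

/-- `T` is a well-formed triplet set: in each triplet the three leaves are distinct, and
the coding is invariant under swapping the first two coordinates (`xy|z = yx|z`). -/
def IsTripletSet (T : Set (L × L × L)) : Prop :=
  ∀ t ∈ T, (t.2.1, t.1, t.2.2) ∈ T ∧ t.1 ≠ t.2.1 ∧ t.1 ≠ t.2.2 ∧ t.2.1 ≠ t.2.2

/-- `T` is dense: for any three distinct leaves at least one triplet on them is present. -/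
def DenseT (T : Set (L × L × L)) : Prop :=
  ∀ x ∈ tripletLeaves T, ∀ y ∈ tripletLeaves T, ∀ z ∈ tripletLeaves T,
    x ≠ y → x ≠ z → y ≠ z → (x, y, z) ∈ T ∨ (x, z, y) ∈ T ∨ (y, z, x) ∈ T

/-- `S` is an SN-set of `T` with respect to the leaf set `U`: `S ⊆ U` and there is
no triplet `xy|z ∈ T` with `x, z ∈ S` and `y ∉ S`. -/
def SNSetOn (T : Set (L × L × L)) (U S : Set L) : Prop :=
  S ⊆ U ∧ ¬ ∃ x y z, (x, y, z) ∈ T ∧ x ∈ S ∧ z ∈ S ∧ y ∉ S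

/-- `S` is an SN-set of `T`. -/
def SNSet (T : Set (L × L × L)) (S : Set L) : Prop := SNSetOn T (tripletLeaves T) S

/-- `S` is a maximal SN-set: a nontrivial SN-set not strictly contained
in any nontrivial SN-set. -/
def MaxSNSet (T : Set (L × L × L)) (S : Set L) : Prop :=
  SNSet T S ∧ S ≠ tripletLeaves T ∧
    ∀ S', SNSet T S' → S' ≠ tripletLeaves T → S ⊆ S' → S' = S

/-- `S` is an SN-set maximal under the restriction of not containing `B`. -/
def MaxSNAvoid (T : Set (L × L × L)) (B S : Set L) : Prop :=
  SNSet T S ∧ ¬ B ⊆ S ∧ ∀ S', SNSet T S' → ¬ B ⊆ S' → S ⊆ S' → S' = S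

/-- `T|S`: the triplets of `T` all of whose leaves lie in `S`. -/
def restrictT (T : Set (L × L × L)) (S : Set L) : Set (L × L × L) :=
  {t ∈ T | t.1 ∈ S ∧ t.2.1 ∈ S ∧ t.2.2 ∈ S}

/-- A cut-arc: an arc whose removal disconnects the underlying undirected graph. -/
def CutArc (A : Set (V × V)) (a : V × V) : Prop :=
  a ∈ A ∧ ¬ ConnectedGraph (A \ {a})

/-- A simple network: it contains a reticulation vertex and all its cut-arcs are
trivial (i.e. end in a leaf). -/
def SimpleNet (N : PhyloNetwork V L) : Prop :=
  (∃ v, IsRetic N.arcs v) ∧ ∀ a, CutArc N.arcs a → IsLeafV N.arcs a.2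

/-- A level-`k` network: every biconnected component contains at most `k`
reticulation vertices. -/
def IsLevel (N : PhyloNetwork V L) (k : ℕ) : Prop :=
  ∀ S, BiconnComp N.arcs S → {v ∈ S | IsRetic N.arcs v}.ncard ≤ k

/-- The total number of reticulation vertices of a network. -/
noncomputable def numRetic (N : PhyloNetwork V L) : ℕ := {v | IsRetic N.arcs v}.ncard

/-- The level of a network: the smallest `k` such that it is a level-`k` network. -/
noncomputable def netLevel (N : PhyloNetwork V L) : ℕ := sInf {k | IsLevel N k}

/-- A highest cut-arc: a cut-arc not reachable from any other cut-arc. -/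
def HighestCutArc (A : Set (V × V)) (a : V × V) : Prop :=
  CutArc A a ∧ ∀ b, CutArc A b → b ≠ a → ¬ Reaches A b.2 a.1

/-- The set of leaf labels below a vertex `v`. -/
def leavesBelowV (N : PhyloNetwork V L) (v : V) : Set L :=
  {x | ∃ w, IsLeafV N.arcs w ∧ Reaches N.arcs v w ∧ N.lab w = x}

/-- An (undirected) cycle in the underlying undirected graph, as a list of at least
three distinct vertices that are consecutively adjacent, the last being adjacent
to the first. -/
def IsUCycle (A : Set (V × V)) (l : List V) : Prop :=
  3 ≤ l.length ∧ l.Nodup ∧ l.Chain' (UAdj A) ∧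
    ∃ u w, l.head? = some u ∧ l.getLast? = some w ∧ UAdj A w u

/-- A highest reticulation: a reticulation lying on a cycle through the root. -/
def HighestRetic (N : PhyloNetwork V L) (r : V) : Prop :=
  IsRetic N.arcs r ∧
    ∃ c, IsUCycle N.arcs c ∧ r ∈ c ∧ ∃ rt, IsRoot N.arcs rt ∧ rt ∈ c

/-- `BHR(N)`: the set of leaves below a highest reticulation. -/
def BHR (N : PhyloNetwork V L) : Set L :=
  {x | ∃ r, HighestRetic N r ∧ x ∈ leavesBelowV N r}

/-- The collection of sets of leaves below the highest cut-arcs of `N`. -/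
def highCutArcLeafSets (N : PhyloNetwork V L) : Set (Set L) :=
  {S | ∃ a, HighestCutArc N.arcs a ∧ S = leavesBelowV N a.2}

/-- `CutInduce(N,T)`: the induced triplet set on the sets of leaves below the
highest cut-arcs of `N`. -/
def CutInduce (N : PhyloNetwork V L) (T : Set (L × L × L)) :
    Set (Set L × Set L × Set L) :=
  {t | t.1 ∈ highCutArcLeafSets N ∧ t.2.1 ∈ highCutArcLeafSets N ∧
       t.2.2 ∈ highCutArcLeafSets N ∧
       t.1 ≠ t.2.1 ∧ t.1 ≠ t.2.2 ∧ t.2.1 ≠ t.2.2 ∧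
       ∃ x ∈ t.1, ∃ y ∈ t.2.1, ∃ z ∈ t.2.2, (x, y, z) ∈ T}

/-- `T ∇ C`: the triplet set induced by a collection `C` of leaf sets. -/
def TInduced (T : Set (L × L × L)) (C : Set (Set L)) : Set (Set L × Set L × Set L) :=
  {t | t.1 ∈ C ∧ t.2.1 ∈ C ∧ t.2.2 ∈ C ∧
       t.1 ≠ t.2.1 ∧ t.1 ≠ t.2.2 ∧ t.2.1 ≠ t.2.2 ∧
       ∃ x ∈ t.1, ∃ y ∈ t.2.1, ∃ z ∈ t.2.2, (x, y, z) ∈ T}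

/-- A label-preserving isomorphism of networks. -/
def NetIso {V₁ V₂ L : Type} (N₁ : PhyloNetwork V₁ L) (N₂ : PhyloNetwork V₂ L) : Prop :=
  ∃ e : V₁ ≃ V₂, (∀ u v : V₁, (u, v) ∈ N₁.arcs ↔ (e u, e v) ∈ N₂.arcs) ∧
    ∀ v, IsLeafV N₁.arcs v → N₂.lab (e v) = N₁.lab v

/-- A (rooted, binary) phylogenetic tree given by its arc set: acyclic, a unique
vertex of indegree 0, every vertex of indegree at most 1 and outdegree 0 or 2.
(The single-vertex tree is allowed.) -/
def IsTreeArcs (A : Set (V × V)) : Prop :=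
  Acyclic A ∧ (∃! r, indeg A r = 0) ∧ (∀ v, indeg A v ≤ 1) ∧
    ∀ v, outdeg A v = 0 ∨ outdeg A v = 2

/-- The leaf labels of a tree (leaves are the vertices of outdegree 0). -/
def treeLeafSet (A : Set (V × V)) (lab : V → L) : Set L :=
  {x | ∃ v, outdeg A v = 0 ∧ lab v = x}

/-- The triplet `xy|z` is consistent with the tree given by `A` and labelling `lab`. -/
def TreeConsistentTriplet (A : Set (V × V)) (lab : V → L) (x y z : L) : Prop :=
  ∃ a b c : V, outdeg A a = 0 ∧ outdeg A b = 0 ∧ outdeg A c = 0 ∧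
    lab a = x ∧ lab b = y ∧ lab c = z ∧ a ≠ b ∧ a ≠ c ∧ b ≠ c ∧
    ∃ p q, HasEmbedding A p q a b c

/-- A CandidateTBR SN-set: an SN-set `S` of `T` such that `T|S` is consistent with
some phylogenetic tree on the leaf set `S`. -/
def CandidateTBR (T : Set (L × L × L)) (S : Set L) : Prop :=
  SNSet T S ∧ ∃ (V : Type) (_ : Finite V) (A : Set (V × V)) (lab : V → L),
    IsTreeArcs A ∧
    (∀ u v, outdeg A u = 0 → outdeg A v = 0 → lab u = lab v → u = v) ∧
    treeLeafSet A lab = S ∧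
    ∀ t ∈ restrictT T S, TreeConsistentTriplet A lab t.1 t.2.1 t.2.2

/-- `S'` is an SN-set of `T|S` (with leaf set `S`) that is maximal under the
restriction of being a nontrivial (proper) subset of `S`. -/
def MaxProperSN (T : Set (L × L × L)) (S S' : Set L) : Prop :=
  SNSetOn (restrictT T S) S S' ∧ S' ≠ S ∧
    ∀ S'', SNSetOn (restrictT T S) S S'' → S'' ≠ S → S' ⊆ S'' → S'' = S'


/-! ### Basic graph lemmas -/

section Basic

variable {A : Set (V × V)}

lemma reaches_of_arc {u v : V} (h : (u, v) ∈ A) : Reaches A u v :=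
  Relation.ReflTransGen.single h

lemma acyclic_antisymm (hA : Acyclic A) {u v : V} (huv : Reaches A u v)
    (hvu : Reaches A v u) : u = v := by
  rcases (Relation.ReflTransGen.cases_head huv) with h | ⟨w, hw, hwv⟩
  · exact h
  · exact absurd (hwv.trans hvu) (hA u w hw)

lemma outdeg_eq_zero [Finite V] {v : V} (h : outdeg A v = 0) {w : V} :
    (v, w) ∉ A := by
  intro hw
  have hfin : {w | (v, w) ∈ A}.Finite := Set.toFinite _
  have : {w | (v, w) ∈ A} = ∅ := (Set.ncard_eq_zero hfin).mp h
  exact absurd (this ▸ hw : w ∈ (∅ : Set V)) (Set.notMem_empty w)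

lemma no_reach_of_outdeg_zero [Finite V] {v w : V} (h : outdeg A v = 0)
    (hr : Reaches A v w) : w = v := by
  rcases (Relation.ReflTransGen.cases_head hr) with h' | ⟨u, hu, _⟩
  · exact h'.symm
  · exact absurd hu (outdeg_eq_zero h)

lemma parent_unique [Finite V] {v : V} (h : indeg A v ≤ 1) {u w : V}
    (hu : (u, v) ∈ A) (hw : (w, v) ∈ A) : u = w := by
  have hfin : {u | (u, v) ∈ A}.Finite := Set.toFinite _
  exact (Set.ncard_le_one hfin).mp h u hu w hw

lemma exists_parent [Finite V] {v : V} (h : indeg A v ≠ 0) :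
    ∃ u, (u, v) ∈ A := by
  by_contra hc
  push_neg at hc
  have : {u | (u, v) ∈ A} = ∅ := by
    ext u; simp [hc u]
  exact h (by simp [indeg, this])

lemma exists_child [Finite V] {v : V} (h : outdeg A v ≠ 0) :
    ∃ w, (v, w) ∈ A := by
  by_contra hc
  push_neg at hc
  have : {w | (v, w) ∈ A} = ∅ := by
    ext w; simp [hc w]
  exact h (by simp [outdeg, this])

/-- In a graph with indegrees at most 1, two ancestors of a vertex are comparable. -/
lemma reaches_comparable [Finite V] (hdeg : ∀ v, indeg A v ≤ 1)
    {a u v : V} (hu : Reaches A u a) (hv : Reaches A v a) :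
    Reaches A u v ∨ Reaches A v u := by
  induction hu with
  | refl => exact Or.inr hv
  | tail hub harc ih =>
    rename_i b a'
    rcases Relation.ReflTransGen.cases_tail hv with h | ⟨w, hvw, hwa⟩
    · subst h; exact Or.inl (hub.tail harc)
    · have : w = b := parent_unique (hdeg a') hwa harc
      subst this
      exact ih hvw

end Basic
section Paths

variable {A : Set (V × V)}

lemma mem_of_getLast?_eq : ∀ {l : List V} {a : V}, l.getLast? = some a → a ∈ l
  | [], a, h => by simp at h
  | [b], a, h => by simp_all
  | b :: c :: t, a, h => by
      rw [List.getLast?_cons_cons] at h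
      exact List.mem_cons_of_mem _ (mem_of_getLast?_eq h)

lemma head_eq_of_head? {l : List V} {a b : V} {t : List V} (hl : l = b :: t)
    (h : l.head? = some a) : b = a := by subst hl; simpa using h

lemma chain'_head_reaches : ∀ {l : List V},
    l.Chain' (fun a b => (a, b) ∈ A) → ∀ {u x : V}, l.head? = some u → x ∈ l →
      Reaches A u x
  | [], _, u, x, hh, hx => by simp at hx
  | a :: t, hc, u, x, hh, hx => by
      have ha : a = u := by simpa using hh
      subst ha
      rcases List.mem_cons.mp hx with rfl | hxt
      · exact Relation.ReflTransGen.refl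
      · match t, hxt with
        | b :: t', hxt =>
          have harc : (a, b) ∈ A := (List.isChain_cons_cons.mp hc).1
          have hrest := chain'_head_reaches (l := b :: t')
            (List.isChain_cons_cons.mp hc).2 rfl hxt
          exact Relation.ReflTransGen.head harc hrest

lemma chain'_mem_reaches_last : ∀ {l : List V},
    l.Chain' (fun a b => (a, b) ∈ A) → ∀ {v x : V}, l.getLast? = some v → x ∈ l →
      Reaches A x v
  | [], _, v, x, hl, hx => by simp at hx
  | [a], _, v, x, hl, hx => by
      have h1 : a = v := by simpa using hl
      have h2 : x = a := by simpa using hx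
      subst h1; subst h2; exact Relation.ReflTransGen.refl
  | a :: b :: t, hc, v, x, hl, hx => by
      rw [List.getLast?_cons_cons] at hl
      rcases List.mem_cons.mp hx with rfl | hxt
      · have harc : (x, b) ∈ A := (List.isChain_cons_cons.mp hc).1
        have := chain'_mem_reaches_last (l := b :: t)
          (List.isChain_cons_cons.mp hc).2 hl (List.mem_cons_self)
        exact Relation.ReflTransGen.head harc this
      · exact chain'_mem_reaches_last (l := b :: t)
          (List.isChain_cons_cons.mp hc).2 hl hxt

lemma pathFromTo_reaches {l : List V} {u v : V} (h : IsPathFromTo A l u v) :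
    Reaches A u v :=
  chain'_head_reaches h.1.2.2 h.2.1 (mem_of_getLast?_eq h.2.2)

lemma pathFromTo_head_reaches {l : List V} {u v x : V} (h : IsPathFromTo A l u v)
    (hx : x ∈ l) : Reaches A u x :=
  chain'_head_reaches h.1.2.2 h.2.1 hx

lemma pathFromTo_reaches_last {l : List V} {u v x : V} (h : IsPathFromTo A l u v)
    (hx : x ∈ l) : Reaches A x v :=
  chain'_mem_reaches_last h.1.2.2 h.2.2 hx

lemma reaches_path (hA : Acyclic A) {u v : V} (h : Reaches A u v) :
    ∃ l, IsPathFromTo A l u v := by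
  induction h using Relation.ReflTransGen.head_induction_on with
  | refl => exact ⟨[v], ⟨by simp, by simp, List.isChain_singleton _⟩, by simp, by simp⟩
  | head harc hrtg ih =>
    rename_i a c
    obtain ⟨l, hl⟩ := ih
    have hanl : a ∉ l := fun hmem =>
      hA a c harc (chain'_head_reaches hl.1.2.2 hl.2.1 hmem)
    obtain ⟨t, rfl⟩ : ∃ t, l = c :: t := by
      cases l with
      | nil => exact absurd hl.1.1 (by simp)
      | cons x t => exact ⟨t, by rw [head_eq_of_head? rfl hl.2.1]⟩
    refine ⟨a :: c :: t, ⟨by simp, ?_, ?_⟩, by simp, ?_⟩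
    · exact List.nodup_cons.mpr ⟨hanl, hl.1.2.1⟩
    · exact List.isChain_cons_cons.mpr ⟨harc, hl.1.2.2⟩
    · rw [List.getLast?_cons_cons]; exact hl.2.2

lemma mem_path_of_between [Finite V] (hA : Acyclic A) (hdeg : ∀ v, indeg A v ≤ 1) :
    ∀ {l : List V} {p c q : V}, IsPathFromTo A l p c → Reaches A p q →
      Reaches A q c → q ∈ l := by
  intro l
  induction l with
  | nil => intro p c q hl; exact absurd hl.1.1 (by simp)
  | cons a t ih =>
    intro p c q hl hpq hqc
    have hap : a = p := by simpa using hl.2.1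
    subst hap
    by_cases hq : a = q
    · exact hq ▸ List.mem_cons_self
    rcases Relation.ReflTransGen.cases_head hpq with h | ⟨w, hw, hwq⟩
    · exact absurd h hq
    cases t with
    | nil =>
      have hc : a = c := by simpa using hl.2.2
      exact absurd (acyclic_antisymm hA hpq (hc ▸ hqc)) hq
    | cons b t' =>
      have harc : (a, b) ∈ A := (List.isChain_cons_cons.mp hl.1.2.2).1
      have hpath : IsPathFromTo A (b :: t') b c := by
        refine ⟨⟨by simp, (List.nodup_cons.mp hl.1.2.1).2,
          (List.isChain_cons_cons.mp hl.1.2.2).2⟩, by simp, ?_⟩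
        have := hl.2.2
        rwa [List.getLast?_cons_cons] at this
      have hbc : Reaches A b c := pathFromTo_reaches hpath
      have hbq : Reaches A b q := by
        rcases reaches_comparable hdeg hqc hbc with hqb | hbq
        · rcases Relation.ReflTransGen.cases_tail hqb with h | ⟨u', hqu', hu'b⟩
          · exact h ▸ Relation.ReflTransGen.refl
          · have : u' = a := parent_unique (hdeg b) hu'b harc
            subst this
            exact absurd (acyclic_antisymm hA hpq hqu') hq
        · exact hbq
      exact List.mem_cons_of_mem _ (ih hpath hbq hqc)

end Paths
section Tree

variable {A : Set (V × V)}

/-- The set of ancestors of a vertex. -/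
def ancSet (A : Set (V × V)) (v : V) : Set V := {w | Reaches A w v}

lemma anc_strict [Finite V] (hA : Acyclic A) {u v : V} (h : Reaches A u v)
    (hne : u ≠ v) : (ancSet A u).ncard < (ancSet A v).ncard := by
  apply Set.ncard_lt_ncard _ (Set.toFinite _)
  constructor
  · intro w hw; exact Relation.ReflTransGen.trans hw h
  · intro hsub
    have hv : v ∈ ancSet A v := Relation.ReflTransGen.refl
    exact hne (acyclic_antisymm hA h (hsub hv))

lemma exists_min_common_anc [Finite V] (hA : Acyclic A)
    (hdeg : ∀ v, indeg A v ≤ 1) {a b w0 : V} (h0a : Reaches A w0 a)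
    (h0b : Reaches A w0 b) :
    ∃ m, Reaches A m a ∧ Reaches A m b ∧
      ∀ w, Reaches A w a → Reaches A w b → Reaches A w m := by
  obtain ⟨m, hm, hmax⟩ := Set.exists_max_image {w | Reaches A w a ∧ Reaches A w b}
    (fun w => (ancSet A w).ncard) (Set.toFinite _) ⟨w0, h0a, h0b⟩
  refine ⟨m, hm.1, hm.2, fun w hwa hwb => ?_⟩
  rcases reaches_comparable hdeg hwa hm.1 with hwm | hmw
  · exact hwm
  · by_cases hmw' : m = w
    · exact hmw' ▸ Relation.ReflTransGen.refl
    · exact absurd (hmax w ⟨hwa, hwb⟩) (not_le.mpr (anc_strict hA hmw hmw'))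

lemma root_reaches_all [Finite V] (htree : IsTreeArcs A) {r : V}
    (hr : indeg A r = 0) (v : V) : Reaches A r v := by
  have key : ∀ n, ∀ v : V, (ancSet A v).ncard ≤ n → Reaches A r v := by
    intro n
    induction n with
    | zero =>
      intro v hv
      have : 0 < (ancSet A v).ncard :=
        Set.ncard_pos (Set.toFinite _) |>.mpr ⟨v, Relation.ReflTransGen.refl⟩
      omega
    | succ n ih =>
      intro v hv
      by_cases hvr : v = r
      · exact hvr ▸ Relation.ReflTransGen.refl
      · have hind : indeg A v ≠ 0 := by
          intro h0
          exact hvr (htree.2.1.unique h0 hr)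
        obtain ⟨u, hu⟩ := exists_parent hind
        have huv : u ≠ v := by
          rintro rfl
          exact htree.1 u u hu Relation.ReflTransGen.refl
        have : (ancSet A u).ncard < (ancSet A v).ncard :=
          anc_strict htree.1 (reaches_of_arc hu) huv
        exact (ih u (by omega)).tail hu
  exact key _ v le_rfl

lemma exists_sink_below [Finite V] (hA : Acyclic A) (u : V) :
    ∃ v, Reaches A u v ∧ outdeg A v = 0 := by
  obtain ⟨m, hm, hmax⟩ := Set.exists_max_image {w | Reaches A u w}
    (fun w => (ancSet A w).ncard) (Set.toFinite _) ⟨u, Relation.ReflTransGen.refl⟩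
  refine ⟨m, hm, ?_⟩
  by_contra h0
  obtain ⟨w, hw⟩ := exists_child h0
  have hmw : m ≠ w := by
    rintro rfl; exact hA m m hw Relation.ReflTransGen.refl
  have : (ancSet A m).ncard < (ancSet A w).ncard :=
    anc_strict hA (reaches_of_arc hw) hmw
  exact absurd (hmax w (hm.tail hw)) (not_le.mpr this)

end Tree
section Embedding

variable {A : Set (V × V)}

lemma embedding_of_anc [Finite V] (htree : IsTreeArcs A) {a b c m : V}
    (hma : Reaches A m a) (hmb : Reaches A m b) (hmc : ¬ Reaches A m c) :
    ∃ p q, HasEmbedding A p q a b c := by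
  have hA := htree.1
  have hdeg := htree.2.2.1
  obtain ⟨r, hr, -⟩ := htree.2.1
  obtain ⟨q, hqa, hqb, hqmin⟩ := exists_min_common_anc hA hdeg hma hmb
  have hmq : Reaches A m q := hqmin m hma hmb
  have hqc : ¬ Reaches A q c := fun h => hmc (hmq.trans h)
  obtain ⟨p, hpq, hpc, hpmin⟩ := exists_min_common_anc hA hdeg
    (root_reaches_all htree hr q) (root_reaches_all htree hr c)
  have hpne : p ≠ q := fun h => hqc (h ▸ hpc)
  obtain ⟨Pqa, hPqa⟩ := reaches_path hA hqa
  obtain ⟨Pqb, hPqb⟩ := reaches_path hA hqb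
  obtain ⟨Ppq, hPpq⟩ := reaches_path hA hpq
  obtain ⟨Ppc, hPpc⟩ := reaches_path hA hpc
  refine ⟨p, q, hpne, Pqa, Pqb, Ppq, Ppc, hPqa, hPqb, hPpq, hPpc,
    ?_, ?_, ?_, ?_, ?_, ?_⟩
  · -- Pqa, Pqb
    intro w h1 h2
    have hw : w = q := acyclic_antisymm hA
      (hqmin w (pathFromTo_reaches_last hPqa h1) (pathFromTo_reaches_last hPqb h2))
      (pathFromTo_head_reaches hPqa h1)
    subst hw
    exact ⟨Or.inl hPqa.2.1, Or.inl hPqb.2.1⟩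
  · -- Pqa, Ppq
    intro w h1 h2
    have hw : w = q := acyclic_antisymm hA (pathFromTo_reaches_last hPpq h2)
      (pathFromTo_head_reaches hPqa h1)
    subst hw
    exact ⟨Or.inl hPqa.2.1, Or.inr hPpq.2.2⟩
  · -- Pqa, Ppc
    intro w h1 h2
    exact absurd ((pathFromTo_head_reaches hPqa h1).trans
      (pathFromTo_reaches_last hPpc h2)) hqc
  · -- Pqb, Ppq
    intro w h1 h2
    have hw : w = q := acyclic_antisymm hA (pathFromTo_reaches_last hPpq h2)
      (pathFromTo_head_reaches hPqb h1)
    subst hw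
    exact ⟨Or.inl hPqb.2.1, Or.inr hPpq.2.2⟩
  · -- Pqb, Ppc
    intro w h1 h2
    exact absurd ((pathFromTo_head_reaches hPqb h1).trans
      (pathFromTo_reaches_last hPpc h2)) hqc
  · -- Ppq, Ppc
    intro w h1 h2
    have hw : w = p := acyclic_antisymm hA
      (hpmin w (pathFromTo_reaches_last hPpq h1) (pathFromTo_reaches_last hPpc h2))
      (pathFromTo_head_reaches hPpq h1)
    subst hw
    exact ⟨Or.inl hPpq.2.1, Or.inl hPpc.2.1⟩

lemma anc_of_embedding [Finite V] (htree : IsTreeArcs A) {p q a b c : V}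
    (hc0 : outdeg A c = 0) (hac : a ≠ c) (hE : HasEmbedding A p q a b c) :
    ∃ m, Reaches A m a ∧ Reaches A m b ∧ ¬ Reaches A m c := by
  obtain ⟨hpq, Pqa, Pqb, Ppq, Ppc, h1, h2, h3, h4, d1, d2, d3, d4, d5, d6⟩ := hE
  refine ⟨q, pathFromTo_reaches h1, pathFromTo_reaches h2, fun hqc => ?_⟩
  have hq1 : q ∈ Ppc :=
    mem_path_of_between htree.1 htree.2.2.1 h4 (pathFromTo_reaches h3) hqc
  have hq2 : q ∈ Ppq := mem_of_getLast?_eq h3.2.2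
  rcases (d6 q hq2 hq1).2 with hend | hend
  · rw [h4.2.1] at hend
    exact hpq (Option.some_injective _ hend)
  · rw [h4.2.2] at hend
    have hqc' : q = c := Option.some_injective _ hend.symm
    subst hqc'
    exact hac (no_reach_of_outdeg_zero hc0 (pathFromTo_reaches h1))
end Embedding
section Subtree

variable {A : Set (V × V)}

lemma deg_set_ne_zero [Finite V] {s : Set V} {u : V} (hu : u ∈ s) : s.ncard ≠ 0 := by
  intro h
  rw [Set.ncard_eq_zero (Set.toFinite _)] at h
  exact absurd (h ▸ hu) (Set.notMem_empty u)

lemma ncard_subtype {P : V → Prop} (s : Set {x // P x}) :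
    s.ncard = (Subtype.val '' s).ncard :=
  (Set.ncard_image_of_injective s Subtype.val_injective).symm

lemma subtree_candidate [Finite V] (htree : IsTreeArcs A) (lab : V → L)
    (hinj : ∀ u v, outdeg A u = 0 → outdeg A v = 0 → lab u = lab v → u = v)
    (c₁ : V) (T' : Set (L × L × L))
    (hcons : ∀ t ∈ T', ∃ a b c : V,
      outdeg A a = 0 ∧ outdeg A b = 0 ∧ outdeg A c = 0 ∧
      Reaches A c₁ a ∧ Reaches A c₁ b ∧ Reaches A c₁ c ∧
      lab a = t.1 ∧ lab b = t.2.1 ∧ lab c = t.2.2 ∧ a ≠ b ∧ a ≠ c ∧ b ≠ c ∧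
      ∃ m, Reaches A m a ∧ Reaches A m b ∧ ¬ Reaches A m c) :
    ∃ (V' : Type) (_ : Finite V') (A' : Set (V' × V')) (lab' : V' → L),
      IsTreeArcs A' ∧
      (∀ u v, outdeg A' u = 0 → outdeg A' v = 0 → lab' u = lab' v → u = v) ∧
      treeLeafSet A' lab' =
        {x | ∃ w, outdeg A w = 0 ∧ Reaches A c₁ w ∧ lab w = x} ∧
      ∀ t ∈ T', TreeConsistentTriplet A' lab' t.1 t.2.1 t.2.2 := by
  have hA := htree.1
  have hdeg := htree.2.2.1
  set V' := {v : V // Reaches A c₁ v} with hV'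
  set A' : Set (V' × V') := {p | (p.1.1, p.2.1) ∈ A} with hA'
  set lab' : V' → L := fun v => lab v.1 with hlab'
  -- reachability transfer
  have hdown : ∀ {u v : V'}, Reaches A' u v → Reaches A u.1 v.1 := by
    intro u v h
    exact Relation.ReflTransGen.lift Subtype.val (fun a b h => h) _ _ h
  have hup : ∀ {x y : V} (hx : Reaches A c₁ x) (hy : Reaches A c₁ y),
      Reaches A x y → Reaches A' ⟨x, hx⟩ ⟨y, hy⟩ := by
    intro x y hx hy h
    induction h with
    | refl => exact Relation.ReflTransGen.refl
    | tail hxb harc ih =>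
      rename_i b c
      have hb : Reaches A c₁ b := hx.trans hxb
      exact (ih hb).tail harc
  -- degree transfer
  have hout : ∀ v : V', outdeg A' v = outdeg A v.1 := by
    intro v
    rw [outdeg, outdeg, ncard_subtype]
    congr 1
    ext w
    constructor
    · rintro ⟨w', hw', rfl⟩; exact hw'
    · intro hw
      exact ⟨⟨w, v.2.tail hw⟩, hw, rfl⟩
  have hin : ∀ v : V', v.1 ≠ c₁ → indeg A' v = indeg A v.1 := by
    intro v hv
    rw [indeg, indeg, ncard_subtype]
    congr 1
    ext u
    constructor
    · rintro ⟨u', hu', rfl⟩; exact hu'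
    · intro hu
      rcases Relation.ReflTransGen.cases_tail v.2 with h | ⟨u', hcu', hu'v⟩
      · exact absurd h hv
      · have : u' = u := parent_unique (hdeg v.1) hu'v hu
        exact ⟨⟨u, by rw [← this]; exact hcu'⟩, hu, rfl⟩
  have hinc₁ : ∀ v : V', v.1 = c₁ → indeg A' v = 0 := by
    intro v hv
    rw [indeg, Set.ncard_eq_zero (Set.toFinite _)]
    ext u
    simp only [Set.mem_setOf_eq, Set.mem_empty_iff_false, iff_false]
    intro hu
    exact hA u.1 v.1 hu (by rw [hv]; exact u.2)
  have htree' : IsTreeArcs A' := by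
    refine ⟨?_, ?_, ?_, ?_⟩
    · intro u v huv hr
      exact hA u.1 v.1 huv (hdown hr)
    · refine ⟨⟨c₁, Relation.ReflTransGen.refl⟩, hinc₁ _ rfl, ?_⟩
      intro v hv
      by_contra hne
      have hvc : v.1 ≠ c₁ := fun h => hne (Subtype.ext h)
      rcases Relation.ReflTransGen.cases_tail v.2 with h | ⟨u', hcu', hu'v⟩
      · exact hvc h
      · have : indeg A' v ≠ 0 := by
          rw [hin v hvc]
          exact deg_set_ne_zero (show u' ∈ {u | (u, v.1) ∈ A} from hu'v)
        exact this hv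
    · intro v
      by_cases hv : v.1 = c₁
      · rw [hinc₁ v hv]; omega
      · rw [hin v hv]; exact hdeg v.1
    · intro v
      rw [hout]
      exact htree.2.2.2 v.1
  refine ⟨V', inferInstance, A', lab', htree', ?_, ?_, ?_⟩
  · intro u v hu hv huv
    rw [hout] at hu hv
    exact Subtype.ext (hinj u.1 v.1 hu hv huv)
  · ext x
    constructor
    · rintro ⟨v, hv, rfl⟩
      rw [hout] at hv
      exact ⟨v.1, hv, v.2, rfl⟩
    · rintro ⟨w, hw, hcw, rfl⟩
      exact ⟨⟨w, hcw⟩, by rw [hout]; exact hw, rfl⟩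
  · intro t ht
    obtain ⟨a, b, c, ha0, hb0, hc0, hca, hcb, hcc, hla, hlb, hlc, hab, hac, hbc,
      m, hma, hmb, hmc⟩ := hcons t ht
    -- m is below c₁
    have hcm : Reaches A c₁ m := by
      rcases reaches_comparable hdeg hma hca with h | h
      · exact absurd (h.trans hcc) hmc
      · exact h
    refine ⟨⟨a, hca⟩, ⟨b, hcb⟩, ⟨c, hcc⟩, ?_, ?_, ?_, hla, hlb, hlc,
      fun h => hab (congrArg Subtype.val h), fun h => hac (congrArg Subtype.val h),
      fun h => hbc (congrArg Subtype.val h), ?_⟩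
    · rw [hout]; exact ha0
    · rw [hout]; exact hb0
    · rw [hout]; exact hc0
    · refine embedding_of_anc htree' (a := ⟨a, hca⟩) (b := ⟨b, hcb⟩)
        (c := ⟨c, hcc⟩) (m := ⟨m, hcm⟩) (hup hcm hca hma) (hup hcm hcb hmb) ?_
      intro h
      exact hmc (hdown h)

end Subtree
section Glue

instance optionFinite (α : Type) [Finite α] : Finite (Option α) :=
  Finite.of_equiv (α ⊕ PUnit.{1}) (Equiv.optionEquivSumPUnit.{0,0} α).symm

lemma glue_candidate {V₁ V₂ : Type} [Finite V₁] [Finite V₂]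
    (A₁ : Set (V₁ × V₁)) (A₂ : Set (V₂ × V₂)) (lab₁ : V₁ → L) (lab₂ : V₂ → L)
    (ht₁ : IsTreeArcs A₁) (ht₂ : IsTreeArcs A₂)
    (hinj₁ : ∀ u v, outdeg A₁ u = 0 → outdeg A₁ v = 0 → lab₁ u = lab₁ v → u = v)
    (hinj₂ : ∀ u v, outdeg A₂ u = 0 → outdeg A₂ v = 0 → lab₂ u = lab₂ v → u = v)
    (hdisj : ∀ x, x ∈ treeLeafSet A₁ lab₁ → x ∈ treeLeafSet A₂ lab₂ → False)
    (T' : Set (L × L × L))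
    (hcase : ∀ t ∈ T', (t.1 ≠ t.2.1 ∧ t.1 ≠ t.2.2 ∧ t.2.1 ≠ t.2.2) ∧
      (TreeConsistentTriplet A₁ lab₁ t.1 t.2.1 t.2.2 ∨
       TreeConsistentTriplet A₂ lab₂ t.1 t.2.1 t.2.2 ∨
       (t.1 ∈ treeLeafSet A₁ lab₁ ∧ t.2.1 ∈ treeLeafSet A₁ lab₁ ∧
          t.2.2 ∈ treeLeafSet A₂ lab₂) ∨
       (t.1 ∈ treeLeafSet A₂ lab₂ ∧ t.2.1 ∈ treeLeafSet A₂ lab₂ ∧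
          t.2.2 ∈ treeLeafSet A₁ lab₁))) :
    ∃ (W : Type) (_ : Finite W) (A' : Set (W × W)) (lab' : W → L),
      IsTreeArcs A' ∧
      (∀ u v, outdeg A' u = 0 → outdeg A' v = 0 → lab' u = lab' v → u = v) ∧
      treeLeafSet A' lab' = treeLeafSet A₁ lab₁ ∪ treeLeafSet A₂ lab₂ ∧
      ∀ t ∈ T', TreeConsistentTriplet A' lab' t.1 t.2.1 t.2.2 := by
  classical
  obtain ⟨r₁, hr₁, hr₁u⟩ := ht₁.2.1
  obtain ⟨r₂, hr₂, hr₂u⟩ := ht₂.2.1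
  set A' : Set (Option (V₁ ⊕ V₂) × Option (V₁ ⊕ V₂)) := {p |
      (∃ u v, (u, v) ∈ A₁ ∧ p = (some (.inl u), some (.inl v))) ∨
      (∃ u v, (u, v) ∈ A₂ ∧ p = (some (.inr u), some (.inr v))) ∨
      p = (none, some (.inl r₁)) ∨ p = (none, some (.inr r₂))} with hA'def
  set lab' : Option (V₁ ⊕ V₂) → L := fun w => w.elim (lab₁ r₁) (Sum.elim lab₁ lab₂) with hlab'
  have injL : Function.Injective (fun v : V₁ => (some (.inl v) : Option (V₁ ⊕ V₂))) := by
    intro a b h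
    simpa using h
  have injR : Function.Injective (fun v : V₂ => (some (.inr v) : Option (V₁ ⊕ V₂))) := by
    intro a b h
    simpa using h
  -- out-neighbour identification
  have outL : ∀ u : V₁, {w : Option (V₁ ⊕ V₂) | (some (.inl u), w) ∈ A'} =
      (fun v : V₁ => (some (.inl v) : Option (V₁ ⊕ V₂))) '' {v | (u, v) ∈ A₁} := by
    intro u
    ext w
    constructor
    · rintro (⟨u', v, h, heq⟩ | ⟨u', v, h, heq⟩ | heq | heq) <;>
        simp only [Prod.mk.injEq] at heq
      · obtain ⟨h1, h2⟩ := heq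
        simp only [Option.some.injEq, Sum.inl.injEq] at h1
        exact ⟨v, h1 ▸ h, h2.symm⟩
      · simp at heq
      · exact absurd heq.1 (by simp)
      · exact absurd heq.1 (by simp)
    · rintro ⟨v, hv, rfl⟩
      exact Or.inl ⟨u, v, hv, rfl⟩
  have outR : ∀ u : V₂, {w : Option (V₁ ⊕ V₂) | (some (.inr u), w) ∈ A'} =
      (fun v : V₂ => (some (.inr v) : Option (V₁ ⊕ V₂))) '' {v | (u, v) ∈ A₂} := by
    intro u
    ext w
    constructor
    · rintro (⟨u', v, h, heq⟩ | ⟨u', v, h, heq⟩ | heq | heq) <;>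
        simp only [Prod.mk.injEq] at heq
      · simp at heq
      · obtain ⟨h1, h2⟩ := heq
        simp only [Option.some.injEq, Sum.inr.injEq] at h1
        exact ⟨v, h1 ▸ h, h2.symm⟩
      · exact absurd heq.1 (by simp)
      · exact absurd heq.1 (by simp)
    · rintro ⟨v, hv, rfl⟩
      exact Or.inr (Or.inl ⟨u, v, hv, rfl⟩)
  have outN : {w : Option (V₁ ⊕ V₂) | (none, w) ∈ A'} =
      {(some (.inl r₁) : Option (V₁ ⊕ V₂)), some (.inr r₂)} := by
    ext w
    constructor
    · rintro (⟨u', v, h, heq⟩ | ⟨u', v, h, heq⟩ | heq | heq) <;>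
        simp only [Prod.mk.injEq] at heq
      · exact absurd heq.1.symm (by simp)
      · exact absurd heq.1.symm (by simp)
      · exact Or.inl heq.2
      · exact Or.inr heq.2
    · rintro (rfl | rfl)
      · exact Or.inr (Or.inr (Or.inl rfl))
      · exact Or.inr (Or.inr (Or.inr rfl))
  have houtL : ∀ u : V₁, outdeg A' (some (.inl u)) = outdeg A₁ u := by
    intro u
    rw [outdeg, outdeg, outL u, Set.ncard_image_of_injective _ injL]
  have houtR : ∀ u : V₂, outdeg A' (some (.inr u)) = outdeg A₂ u := by
    intro u
    rw [outdeg, outdeg, outR u, Set.ncard_image_of_injective _ injR]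
  have houtN : outdeg A' none = 2 := by
    rw [outdeg, outN, Set.ncard_pair (fun h => Sum.inl_ne_inr (Option.some_injective _ h))]
  -- in-neighbour identification
  have inL : ∀ v : V₁, v ≠ r₁ → {w : Option (V₁ ⊕ V₂) | (w, some (.inl v)) ∈ A'} =
      (fun u : V₁ => (some (.inl u) : Option (V₁ ⊕ V₂))) '' {u | (u, v) ∈ A₁} := by
    intro v hv
    ext w
    constructor
    · rintro (⟨u', v', h, heq⟩ | ⟨u', v', h, heq⟩ | heq | heq) <;>
        simp only [Prod.mk.injEq] at heq
      · obtain ⟨h1, h2⟩ := heq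
        simp only [Option.some.injEq, Sum.inl.injEq] at h2
        exact ⟨u', h2 ▸ h, h1.symm⟩
      · simp at heq
      · simp only [Option.some.injEq, Sum.inl.injEq] at heq
        exact absurd heq.2 hv
      · simp at heq
    · rintro ⟨u, hu, rfl⟩
      exact Or.inl ⟨u, v, hu, rfl⟩
  have inR : ∀ v : V₂, v ≠ r₂ → {w : Option (V₁ ⊕ V₂) | (w, some (.inr v)) ∈ A'} =
      (fun u : V₂ => (some (.inr u) : Option (V₁ ⊕ V₂))) '' {u | (u, v) ∈ A₂} := by
    intro v hv
    ext w
    constructor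
    · rintro (⟨u', v', h, heq⟩ | ⟨u', v', h, heq⟩ | heq | heq) <;>
        simp only [Prod.mk.injEq] at heq
      · simp at heq
      · obtain ⟨h1, h2⟩ := heq
        simp only [Option.some.injEq, Sum.inr.injEq] at h2
        exact ⟨u', h2 ▸ h, h1.symm⟩
      · simp at heq
      · simp only [Option.some.injEq, Sum.inr.injEq] at heq
        exact absurd heq.2 hv
    · rintro ⟨u, hu, rfl⟩
      exact Or.inr (Or.inl ⟨u, v, hu, rfl⟩)
  have hparents₁ : ∀ u, (u, r₁) ∉ A₁ := fun u hu =>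
    deg_set_ne_zero (show u ∈ {u | (u, r₁) ∈ A₁} from hu) hr₁
  have hparents₂ : ∀ u, (u, r₂) ∉ A₂ := fun u hu =>
    deg_set_ne_zero (show u ∈ {u | (u, r₂) ∈ A₂} from hu) hr₂
  have inLr : {w : Option (V₁ ⊕ V₂) | (w, some (.inl r₁)) ∈ A'} = {(none : Option (V₁ ⊕ V₂))} := by
    ext w
    constructor
    · rintro (⟨u', v', h, heq⟩ | ⟨u', v', h, heq⟩ | heq | heq) <;>
        simp only [Prod.mk.injEq] at heq
      · obtain ⟨h1, h2⟩ := heq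
        simp only [Option.some.injEq, Sum.inl.injEq] at h2
        exact absurd (by rw [← h2] at h; exact h) (hparents₁ u')
      · simp at heq
      · exact heq.1
      · simp at heq
    · rintro rfl
      exact Or.inr (Or.inr (Or.inl rfl))
  have inRr : {w : Option (V₁ ⊕ V₂) | (w, some (.inr r₂)) ∈ A'} = {(none : Option (V₁ ⊕ V₂))} := by
    ext w
    constructor
    · rintro (⟨u', v', h, heq⟩ | ⟨u', v', h, heq⟩ | heq | heq) <;>
        simp only [Prod.mk.injEq] at heq
      · simp at heq
      · obtain ⟨h1, h2⟩ := heq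
        simp only [Option.some.injEq, Sum.inr.injEq] at h2
        exact absurd (by rw [← h2] at h; exact h) (hparents₂ u')
      · simp at heq
      · exact heq.1
    · rintro rfl
      exact Or.inr (Or.inr (Or.inr rfl))
  have inN : {w : Option (V₁ ⊕ V₂) | (w, none) ∈ A'} = ∅ := by
    ext w
    simp only [Set.mem_empty_iff_false, iff_false, Set.mem_setOf_eq]
    rintro (⟨u', v', h, heq⟩ | ⟨u', v', h, heq⟩ | heq | heq) <;>
      simp only [Prod.mk.injEq] at heq <;> exact Option.some_ne_none _ heq.2.symm
  have hinL : ∀ v : V₁, v ≠ r₁ → indeg A' (some (.inl v)) = indeg A₁ v := by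
    intro v hv
    rw [indeg, indeg, inL v hv, Set.ncard_image_of_injective _ injL]
  have hinR : ∀ v : V₂, v ≠ r₂ → indeg A' (some (.inr v)) = indeg A₂ v := by
    intro v hv
    rw [indeg, indeg, inR v hv, Set.ncard_image_of_injective _ injR]
  have hinLr : indeg A' (some (.inl r₁)) = 1 := by
    rw [indeg, inLr]; simp
  have hinRr : indeg A' (some (.inr r₂)) = 1 := by
    rw [indeg, inRr]; simp
  have hinN : indeg A' none = 0 := by
    rw [indeg, inN]; simp
  -- reachability transfer
  have liftL : ∀ {u v : V₁}, Reaches A₁ u v →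
      Reaches A' (some (.inl u)) (some (.inl v)) := by
    intro u v h
    exact Relation.ReflTransGen.lift (fun x : V₁ => (some (.inl x) : Option (V₁ ⊕ V₂)))
      (fun a b hab => Or.inl ⟨a, b, hab, rfl⟩) _ _ h
  have liftR : ∀ {u v : V₂}, Reaches A₂ u v →
      Reaches A' (some (.inr u)) (some (.inr v)) := by
    intro u v h
    exact Relation.ReflTransGen.lift (fun x : V₂ => (some (.inr x) : Option (V₁ ⊕ V₂)))
      (fun a b hab => Or.inr (Or.inl ⟨a, b, hab, rfl⟩)) _ _ h
  have projL : ∀ {u : V₁} {t : Option (V₁ ⊕ V₂)}, Reaches A' (some (.inl u)) t →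
      ∃ v, t = some (.inl v) ∧ Reaches A₁ u v := by
    intro u t h
    induction h with
    | refl => exact ⟨u, rfl, Relation.ReflTransGen.refl⟩
    | tail hb harc ih =>
      obtain ⟨v, rfl, hv⟩ := ih
      rcases harc with ⟨u', v', h, heq⟩ | ⟨u', v', h, heq⟩ | heq | heq <;>
        simp only [Prod.mk.injEq] at heq
      · obtain ⟨h1, h2⟩ := heq
        simp only [Option.some.injEq, Sum.inl.injEq] at h1
        exact ⟨v', h2, hv.tail (h1 ▸ h)⟩
      · simp at heq
      · simp at heq
      · simp at heq
  have projR : ∀ {u : V₂} {t : Option (V₁ ⊕ V₂)}, Reaches A' (some (.inr u)) t →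
      ∃ v, t = some (.inr v) ∧ Reaches A₂ u v := by
    intro u t h
    induction h with
    | refl => exact ⟨u, rfl, Relation.ReflTransGen.refl⟩
    | tail hb harc ih =>
      obtain ⟨v, rfl, hv⟩ := ih
      rcases harc with ⟨u', v', h, heq⟩ | ⟨u', v', h, heq⟩ | heq | heq <;>
        simp only [Prod.mk.injEq] at heq
      · simp at heq
      · obtain ⟨h1, h2⟩ := heq
        simp only [Option.some.injEq, Sum.inr.injEq] at h1
        exact ⟨v', h2, hv.tail (h1 ▸ h)⟩
      · simp at heq
      · simp at heq
  -- the glued graph is a tree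
  have htree' : IsTreeArcs A' := by
    refine ⟨?_, ?_, ?_, ?_⟩
    · rintro x y (⟨u, v, h, heq⟩ | ⟨u, v, h, heq⟩ | heq | heq) hr <;>
        (try rw [Prod.mk.injEq] at heq) <;> obtain ⟨rfl, rfl⟩ := heq
      · obtain ⟨v', hv', hvv'⟩ := projL hr
        simp only [Option.some.injEq, Sum.inl.injEq] at hv'
        exact ht₁.1 u v h (hv' ▸ hvv')
      · obtain ⟨v', hv', hvv'⟩ := projR hr
        simp only [Option.some.injEq, Sum.inr.injEq] at hv'
        exact ht₂.1 u v h (hv' ▸ hvv')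
      · obtain ⟨v', hv', -⟩ := projL hr
        simp at hv'
      · obtain ⟨v', hv', -⟩ := projR hr
        simp at hv'
    · refine ⟨none, hinN, ?_⟩
      rintro (_ | (v | v)) hv
      · rfl
      · by_cases h : v = r₁
        · subst h; rw [hinLr] at hv; omega
        · rw [hinL v h] at hv
          exact absurd (hr₁u v hv) h
      · by_cases h : v = r₂
        · subst h; rw [hinRr] at hv; omega
        · rw [hinR v h] at hv
          exact absurd (hr₂u v hv) h
    · rintro (_ | (v | v))
      · rw [hinN]; omega
      · by_cases h : v = r₁
        · subst h; rw [hinLr]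
        · rw [hinL v h]; exact ht₁.2.2.1 v
      · by_cases h : v = r₂
        · subst h; rw [hinRr]
        · rw [hinR v h]; exact ht₂.2.2.1 v
    · rintro (_ | (v | v))
      · rw [houtN]; right; rfl
      · rw [houtL]; exact ht₁.2.2.2 v
      · rw [houtR]; exact ht₂.2.2.2 v
  refine ⟨Option (V₁ ⊕ V₂), inferInstance, A', lab', htree', ?_, ?_, ?_⟩
  · -- injectivity of labels on leaves
    rintro (_ | (u | u)) (_ | (v | v)) hu hv huv
    · rfl
    all_goals first
      | (rw [houtN] at hu; omega)
      | (rw [houtN] at hv; omega)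
      | skip
    · rw [houtL] at hu hv
      exact congrArg _ (congrArg _ (hinj₁ u v hu hv huv))
    · rw [houtL] at hu; rw [houtR] at hv
      exact absurd huv (fun h => hdisj _ ⟨u, hu, rfl⟩ ⟨v, hv, h.symm⟩)
    · rw [houtR] at hu; rw [houtL] at hv
      exact absurd huv (fun h => hdisj _ ⟨v, hv, h.symm⟩ ⟨u, hu, rfl⟩)
    · rw [houtR] at hu hv
      exact congrArg _ (congrArg _ (hinj₂ u v hu hv huv))
  · -- the leaf set is the union
    ext x
    constructor
    · rintro ⟨(_ | (v | v)), hv, rfl⟩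
      · rw [houtN] at hv; omega
      · rw [houtL] at hv; exact Or.inl ⟨v, hv, rfl⟩
      · rw [houtR] at hv; exact Or.inr ⟨v, hv, rfl⟩
    · rintro (⟨v, hv, rfl⟩ | ⟨v, hv, rfl⟩)
      · exact ⟨some (.inl v), by rw [houtL]; exact hv, rfl⟩
      · exact ⟨some (.inr v), by rw [houtR]; exact hv, rfl⟩
  · -- consistency
    intro t ht
    obtain ⟨⟨hd1, hd2, hd3⟩, hcs⟩ := hcase t ht
    rcases hcs with h₁ | h₂ | ⟨hx, hy, hz⟩ | ⟨hx, hy, hz⟩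
    · obtain ⟨a, b, c, ha0, hb0, hc0, hla, hlb, hlc, hab, hac, hbc, p, q, hpq⟩ := h₁
      obtain ⟨m, hma, hmb, hmc⟩ := anc_of_embedding ht₁ hc0 hac hpq
      refine ⟨some (.inl a), some (.inl b), some (.inl c),
        by rw [houtL]; exact ha0, by rw [houtL]; exact hb0,
        by rw [houtL]; exact hc0, hla, hlb, hlc,
        fun h => hab (by simpa using h), fun h => hac (by simpa using h),
        fun h => hbc (by simpa using h), ?_⟩
      refine embedding_of_anc htree' (m := some (.inl m)) (liftL hma) (liftL hmb) ?_
      intro h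
      obtain ⟨v', hv', hvv'⟩ := projL h
      simp only [Option.some.injEq, Sum.inl.injEq] at hv'
      exact hmc (hv' ▸ hvv')
    · obtain ⟨a, b, c, ha0, hb0, hc0, hla, hlb, hlc, hab, hac, hbc, p, q, hpq⟩ := h₂
      obtain ⟨m, hma, hmb, hmc⟩ := anc_of_embedding ht₂ hc0 hac hpq
      refine ⟨some (.inr a), some (.inr b), some (.inr c),
        by rw [houtR]; exact ha0, by rw [houtR]; exact hb0,
        by rw [houtR]; exact hc0, hla, hlb, hlc,
        fun h => hab (by simpa using h), fun h => hac (by simpa using h),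
        fun h => hbc (by simpa using h), ?_⟩
      refine embedding_of_anc htree' (m := some (.inr m)) (liftR hma) (liftR hmb) ?_
      intro h
      obtain ⟨v', hv', hvv'⟩ := projR h
      simp only [Option.some.injEq, Sum.inr.injEq] at hv'
      exact hmc (hv' ▸ hvv')
    · obtain ⟨a, ha0, hla⟩ := hx
      obtain ⟨b, hb0, hlb⟩ := hy
      obtain ⟨c, hc0, hlc⟩ := hz
      have hab : a ≠ b := fun h => hd1 (hla ▸ hlb ▸ h ▸ rfl)
      refine ⟨some (.inl a), some (.inl b), some (.inr c),
        by rw [houtL]; exact ha0, by rw [houtL]; exact hb0,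
        by rw [houtR]; exact hc0, hla, hlb, hlc,
        fun h => hab (by simpa using h), by simp, by simp, ?_⟩
      refine embedding_of_anc htree' (m := some (.inl r₁))
        (liftL (root_reaches_all ht₁ hr₁ a)) (liftL (root_reaches_all ht₁ hr₁ b)) ?_
      intro h
      obtain ⟨v', hv', -⟩ := projL h
      simp at hv'
    · obtain ⟨a, ha0, hla⟩ := hx
      obtain ⟨b, hb0, hlb⟩ := hy
      obtain ⟨c, hc0, hlc⟩ := hz
      have hab : a ≠ b := fun h => hd1 (hla ▸ hlb ▸ h ▸ rfl)
      refine ⟨some (.inr a), some (.inr b), some (.inl c),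
        by rw [houtR]; exact ha0, by rw [houtR]; exact hb0,
        by rw [houtL]; exact hc0, hla, hlb, hlc,
        fun h => hab (by simpa using h), by simp, by simp, ?_⟩
      refine embedding_of_anc htree' (m := some (.inr r₂))
        (liftR (root_reaches_all ht₂ hr₂ a)) (liftR (root_reaches_all ht₂ hr₂ b)) ?_
      intro h
      obtain ⟨v', hv', -⟩ := projR h
      simp at hv'

end Glue
section SN

variable {T : Set (L × L × L)} {S S' S₁ S₂ : Set L}

lemma sn_lift (hS : SNSet T S) (h : SNSetOn (restrictT T S) S S') : SNSet T S' := by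
  refine ⟨h.1.trans hS.1, ?_⟩
  rintro ⟨x, y, z, hxyz, hx, hz, hy⟩
  by_cases hyS : y ∈ S
  · exact h.2 ⟨x, y, z, ⟨hxyz, h.1 hx, hyS, h.1 hz⟩, hx, hz, hy⟩
  · exact hS.2 ⟨x, y, z, hxyz, h.1 hx, h.1 hz, hyS⟩

lemma snOn_singleton (hT : IsTripletSet T) {x : L} (hx : x ∈ S) :
    SNSetOn (restrictT T S) S {x} := by
  refine ⟨by simpa using hx, ?_⟩
  rintro ⟨a, b, c, habc, ha, hc, hb⟩
  rw [Set.mem_singleton_iff] at ha hc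
  exact (hT _ habc.1).2.2.1 (ha.trans hc.symm)

lemma sn_nested_or_disjoint (hT : IsTripletSet T) (hdense : DenseT T)
    (hS : SNSet T S) (h₁ : SNSetOn (restrictT T S) S S₁)
    (h₂ : SNSetOn (restrictT T S) S S₂) {x : L} (hx₁ : x ∈ S₁) (hx₂ : x ∈ S₂) :
    S₁ ⊆ S₂ ∨ S₂ ⊆ S₁ := by
  by_contra hc
  push_neg at hc
  obtain ⟨h1, h2⟩ := hc
  obtain ⟨a, ha₁, ha₂⟩ := Set.not_subset.mp h1
  obtain ⟨b, hb₂, hb₁⟩ := Set.not_subset.mp h2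
  have hamem : a ∈ tripletLeaves T := hS.1 (h₁.1 ha₁)
  have hbmem : b ∈ tripletLeaves T := hS.1 (h₂.1 hb₂)
  have hxmem : x ∈ tripletLeaves T := hS.1 (h₁.1 hx₁)
  have hab : a ≠ b := fun h => ha₂ (h ▸ hb₂)
  have hax : a ≠ x := fun h => ha₂ (h ▸ hx₂)
  have hbx : b ≠ x := fun h => hb₁ (h ▸ hx₁)
  have haS : a ∈ S := h₁.1 ha₁
  have hbS : b ∈ S := h₂.1 hb₂
  have hxS : x ∈ S := h₁.1 hx₁
  rcases hdense a hamem b hbmem x hxmem hab hax hbx with h | h | h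
  · exact h₁.2 ⟨a, b, x, ⟨h, haS, hbS, hxS⟩, ha₁, hx₁, hb₁⟩
  · have h' := (hT _ h).1
    exact h₂.2 ⟨x, a, b, ⟨h', hxS, haS, hbS⟩, hx₂, hb₂, ha₂⟩
  · have h' := (hT _ h).1
    exact h₁.2 ⟨x, b, a, ⟨h', hxS, hbS, haS⟩, hx₁, ha₁, hb₁⟩

lemma exists_maxProper_extension (hfinS : S.Finite) :
    ∀ n (S' : Set L), S.ncard - S'.ncard ≤ n →
      SNSetOn (restrictT T S) S S' → S' ≠ S →
      ∃ M, MaxProperSN T S M ∧ S' ⊆ M := by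
  intro n
  induction n with
  | zero =>
    intro S' hn h hne
    have hsub := h.1
    have : S' = S := Set.eq_of_subset_of_ncard_le hsub (by omega) hfinS
    exact absurd this hne
  | succ n ih =>
    intro S' hn h hne
    by_cases hmax : ∀ S'', SNSetOn (restrictT T S) S S'' → S'' ≠ S → S' ⊆ S'' →
        S'' = S'
    · exact ⟨S', ⟨h, hne, hmax⟩, subset_rfl⟩
    · push_neg at hmax
      obtain ⟨S'', hS'', hne'', hsub'', hne'⟩ := hmax
      have hlt : S'.ncard < S''.ncard :=
        Set.ncard_lt_ncard (ssubset_of_subset_of_ne hsub'' (Ne.symm hne'))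
          (hfinS.subset hS''.1)
      have hle : S''.ncard ≤ S.ncard := Set.ncard_le_ncard hS''.1 hfinS
      obtain ⟨M, hM, hsubM⟩ := ih S'' (by omega) hS'' hne''
      exact ⟨M, hM, hsub''.trans hsubM⟩
end SN
section Helpers

variable {A : Set (V × V)}

lemma child_not_reach [Finite V] (htree : IsTreeArcs A) {r c₁ c₂ : V}
    (hr : indeg A r = 0) (h₁ : (r, c₁) ∈ A) (h₂ : (r, c₂) ∈ A) (hne : c₁ ≠ c₂) :
    ¬ Reaches A c₁ c₂ := by
  intro h
  rcases Relation.ReflTransGen.cases_tail h with h' | ⟨u, hcu, huc⟩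
  · exact hne h'.symm
  · have hur : u = r := parent_unique (htree.2.2.1 c₂) huc h₂
    have hcu' : Reaches A c₁ r := by rw [← hur]; exact hcu
    rcases Relation.ReflTransGen.cases_tail hcu' with h' | ⟨u', -, hu'r⟩
    · exact htree.1 r c₁ h₁ (by rw [h']; exact Relation.ReflTransGen.refl)
    · exact deg_set_ne_zero (show u' ∈ {u | (u, r) ∈ A} from hu'r) hr

lemma children_disjoint [Finite V] (htree : IsTreeArcs A) {r c₁ c₂ : V}
    (hr : indeg A r = 0) (h₁ : (r, c₁) ∈ A) (h₂ : (r, c₂) ∈ A) (hne : c₁ ≠ c₂) :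
    ∀ v, Reaches A c₁ v → Reaches A c₂ v → False := by
  intro v hv₁ hv₂
  rcases reaches_comparable htree.2.2.1 hv₁ hv₂ with h | h
  · exact child_not_reach htree hr h₁ h₂ hne h
  · exact child_not_reach htree hr h₂ h₁ hne.symm h

lemma singleton_candidate {T : Set (L × L × L)} {S : Set L}
    (hT : IsTripletSet T) (hS : SNSet T S) {x : L} (hx : S = {x}) :
    CandidateTBR T S := by
  refine ⟨hS, PUnit, inferInstance, ∅, fun _ => x, ?_, ?_, ?_, ?_⟩
  · refine ⟨?_, ⟨PUnit.unit, ?_, ?_⟩, ?_, ?_⟩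
    · intro u v h; exact absurd h (Set.notMem_empty _)
    · simp only [indeg]
      have : {u : PUnit | (u, PUnit.unit) ∈ (∅ : Set (PUnit × PUnit))} = ∅ := by
        ext u; simp
      rw [this, Set.ncard_empty]
    · intro y _; rfl
    · intro v
      simp only [indeg]
      have : {u : PUnit | (u, v) ∈ (∅ : Set (PUnit × PUnit))} = ∅ := by ext u; simp
      rw [this, Set.ncard_empty]; omega
    · intro v
      left
      simp only [outdeg]
      have : {w : PUnit | (v, w) ∈ (∅ : Set (PUnit × PUnit))} = ∅ := by ext u; simp
      rw [this, Set.ncard_empty]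
  · intro u v _ _ _; rfl
  · rw [hx]
    ext y
    constructor
    · rintro ⟨v, -, rfl⟩; rfl
    · rintro rfl
      refine ⟨PUnit.unit, ?_, rfl⟩
      simp only [outdeg]
      have : {w : PUnit | (PUnit.unit, w) ∈ (∅ : Set (PUnit × PUnit))} = ∅ := by
        ext u; simp
      rw [this, Set.ncard_empty]
  · rintro ⟨a, b, c⟩ ⟨htT, ha, hb, -⟩
    rw [hx] at ha hb
    rw [Set.mem_singleton_iff] at ha hb
    exact absurd (ha.trans hb.symm) (hT _ htT).2.1

end Helpers

/-- Let `T` be a dense triplet set.  An SN-set `S` of `T` is a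
CandidateTBR SN-set (i.e. `T|S` is consistent with some phylogenetic tree) if and
only if `|S| = 1`, or `S` has exactly two SN-subsets maximal under the restriction
of being nontrivial subsets of `S`, both of which are CandidateTBR SN-sets. -/
theorem candidateTBR_characterisation (L : Type) (T : Set (L × L × L))
    (hT : IsTripletSet T) (hfin : (tripletLeaves T).Finite) (hdense : DenseT T)
    (S : Set L) (hS : SNSet T S) :
    CandidateTBR T S ↔
      (S.ncard = 1 ∨
        ∃ S₁ S₂ : Set L, S₁ ≠ S₂ ∧ MaxProperSN T S S₁ ∧ MaxProperSN T S S₂ ∧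
          (∀ S', MaxProperSN T S S' → S' = S₁ ∨ S' = S₂) ∧
          CandidateTBR T S₁ ∧ CandidateTBR T S₂) := by
  constructor
  · -- forward direction
    rintro ⟨-, VV, hVfin, A, lab, htree, hinj, hleaf, hcons⟩
    by_cases hcard : S.ncard = 1
    · exact Or.inl hcard
    right
    haveI := hVfin
    have hA := htree.1
    have hdeg := htree.2.2.1
    have hSfin : S.Finite := hfin.subset hS.1
    obtain ⟨r, hr, hru⟩ := htree.2.1
    obtain ⟨v0, hv0r, hv0⟩ := exists_sink_below hA r
    have hSne : (lab v0) ∈ S := hleaf ▸ ⟨v0, hv0, rfl⟩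
    have hcard2 : 2 ≤ S.ncard := by
      have h1 : 0 < S.ncard := (Set.ncard_pos hSfin).mpr ⟨_, hSne⟩
      omega
    have hrout : outdeg A r = 2 := by
      rcases htree.2.2.2 r with h0 | h2
      · exfalso
        have hsub : S ⊆ {lab r} := by
          rw [← hleaf]
          rintro x ⟨v, hv, rfl⟩
          have : v = r := no_reach_of_outdeg_zero h0 (root_reaches_all htree hr v)
          rw [this]
          rfl
        have := Set.ncard_le_ncard hsub (Set.finite_singleton _)
        rw [Set.ncard_singleton] at this
        omega
      · exact h2
    obtain ⟨c₁, c₂, hc12, hC⟩ := Set.ncard_eq_two.mp hrout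
    have harc₁ : (r, c₁) ∈ A := by
      have : c₁ ∈ {w | (r, w) ∈ A} := by rw [hC]; exact Or.inl rfl
      exact this
    have harc₂ : (r, c₂) ∈ A := by
      have : c₂ ∈ {w | (r, w) ∈ A} := by rw [hC]; exact Or.inr rfl
      exact this
    have hcdisj : ∀ v, Reaches A c₁ v → Reaches A c₂ v → False :=
      children_disjoint htree hr harc₁ harc₂ hc12
    have hbelow : ∀ v, outdeg A v = 0 → Reaches A c₁ v ∨ Reaches A c₂ v := by
      intro v hv
      have hrv := root_reaches_all htree hr v
      have hvr : v ≠ r := by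
        rintro rfl
        rw [hv] at hrout
        omega
      rcases Relation.ReflTransGen.cases_head hrv with h | ⟨w, hw, hwv⟩
      · exact absurd h.symm hvr
      · have hwmem : w ∈ {w | (r, w) ∈ A} := hw
        rw [hC] at hwmem
        rcases hwmem with rfl | rfl
        · exact Or.inl hwv
        · exact Or.inr hwv
    set S₁ : Set L := {x | ∃ w, outdeg A w = 0 ∧ Reaches A c₁ w ∧ lab w = x}
      with hS₁def
    set S₂ : Set L := {x | ∃ w, outdeg A w = 0 ∧ Reaches A c₂ w ∧ lab w = x}
      with hS₂def
    have hS₁S : S₁ ⊆ S := by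
      rintro x ⟨w, h0, -, rfl⟩
      exact hleaf ▸ ⟨w, h0, rfl⟩
    have hS₂S : S₂ ⊆ S := by
      rintro x ⟨w, h0, -, rfl⟩
      exact hleaf ▸ ⟨w, h0, rfl⟩
    have hunion : ∀ x ∈ S, x ∈ S₁ ∨ x ∈ S₂ := by
      intro x hx
      rw [← hleaf] at hx
      obtain ⟨v, hv0', rfl⟩ := hx
      rcases hbelow v hv0' with h | h
      · exact Or.inl ⟨v, hv0', h, rfl⟩
      · exact Or.inr ⟨v, hv0', h, rfl⟩
    have hdisjS : ∀ x, x ∈ S₁ → x ∈ S₂ → False := by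
      rintro x ⟨w1, hw10, hw1c, rfl⟩ ⟨w2, hw20, hw2c, hl⟩
      have : w2 = w1 := hinj _ _ hw20 hw10 hl
      subst this
      exact hcdisj w2 hw1c hw2c
    obtain ⟨l1, hl1c, hl10⟩ := exists_sink_below hA c₁
    obtain ⟨l2, hl2c, hl20⟩ := exists_sink_below hA c₂
    have hne₁ : (lab l1) ∈ S₁ := ⟨l1, hl10, hl1c, rfl⟩
    have hne₂ : (lab l2) ∈ S₂ := ⟨l2, hl20, hl2c, rfl⟩
    have hproper₁ : S₁ ≠ S := by
      intro h
      exact hdisjS (lab l2) (h ▸ hS₂S hne₂) hne₂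
    have hproper₂ : S₂ ≠ S := by
      intro h
      exact hdisjS (lab l1) hne₁ (h ▸ hS₁S hne₁)
    -- a cherry across the two sides is impossible
    have hcross : ∀ u v w, (u, v, w) ∈ restrictT T S → u ∈ S₁ → v ∈ S₂ → False := by
      intro u v w ht' hu hv
      obtain ⟨a, b, c, ha0, hb0, hc0, hla, hlb, hlc, hab, hac, hbc, p, q, hemb⟩ :=
        hcons _ ht'
      obtain ⟨m, hma, hmb, hmc⟩ := anc_of_embedding htree hc0 hac hemb
      obtain ⟨a', ha'0, hca', hla'⟩ := hu
      have haa : a' = a := hinj _ _ ha'0 ha0 (by rw [hla', hla])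
      rw [haa] at hca'
      obtain ⟨b', hb'0, hcb', hlb'⟩ := hv
      have hbb : b' = b := hinj _ _ hb'0 hb0 (by rw [hlb', hlb])
      rw [hbb] at hcb'
      have hwS : w ∈ S := ht'.2.2.2
      rcases hunion w hwS with hw1 | hw2
      · obtain ⟨c', hc'0, hcc', hlc'⟩ := hw1
        have hcc : c' = c := hinj _ _ hc'0 hc0 (by rw [hlc', hlc])
        rw [hcc] at hcc'
        rcases reaches_comparable hdeg hma hca' with h | h
        · exact hmc (h.trans hcc')
        · exact hcdisj b (h.trans hmb) hcb'
      · obtain ⟨c', hc'0, hcc', hlc'⟩ := hw2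
        have hcc : c' = c := hinj _ _ hc'0 hc0 (by rw [hlc', hlc])
        rw [hcc] at hcc'
        rcases reaches_comparable hdeg hmb hcb' with h | h
        · exact hmc (h.trans hcc')
        · exact hcdisj a hca' (h.trans hma)
    -- S₁ and S₂ are SN-sets of T|S
    have hsn₁ : SNSetOn (restrictT T S) S S₁ := by
      refine ⟨hS₁S, ?_⟩
      rintro ⟨x, y, z, ht', hx, hz, hy⟩
      have hyS : y ∈ S := ht'.2.2.1
      rcases hunion y hyS with h | h
      · exact hy h
      · exact hcross x y z ht' hx h
    have hsn₂ : SNSetOn (restrictT T S) S S₂ := by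
      refine ⟨hS₂S, ?_⟩
      rintro ⟨x, y, z, ht', hx, hz, hy⟩
      have hyS : y ∈ S := ht'.2.2.1
      rcases hunion y hyS with h | h
      · have ht'' : (y, x, z) ∈ restrictT T S :=
          ⟨(hT _ ht'.1).1, ht'.2.2.1, ht'.2.1, ht'.2.2.2⟩
        exact hcross y x z ht'' h hx
      · exact hy h
    -- every proper SN-set is contained in one of the sides
    have htri : ∀ S', SNSetOn (restrictT T S) S S' → S' ≠ S →
        S' ⊆ S₁ ∨ S' ⊆ S₂ := by
      intro S' hSN hne
      by_contra hcon
      push_neg at hcon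
      obtain ⟨hc1, hc2⟩ := hcon
      obtain ⟨x, hxS', hx1⟩ := Set.not_subset.mp hc1
      obtain ⟨y, hyS', hy2⟩ := Set.not_subset.mp hc2
      have hx2 : x ∈ S₂ := (hunion x (hSN.1 hxS')).resolve_left hx1
      have hy1 : y ∈ S₁ := (hunion y (hSN.1 hyS')).resolve_right hy2
      obtain ⟨z, hzS, hzS'⟩ := Set.exists_of_ssubset
        (ssubset_of_subset_of_ne hSN.1 hne)
      have hyx : y ≠ x := fun h => hdisjS y hy1 (h ▸ hx2)
      have hyz : y ≠ z := fun h => hzS' (h ▸ hyS')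
      have hxz : x ≠ z := fun h => hzS' (h ▸ hxS')
      have hyl : y ∈ tripletLeaves T := hS.1 (hSN.1 hyS')
      have hxl : x ∈ tripletLeaves T := hS.1 (hSN.1 hxS')
      have hzl : z ∈ tripletLeaves T := hS.1 hzS
      rcases hdense y hyl x hxl z hzl hyx hyz hxz with h | h | h
      · exact hcross y x z ⟨h, hSN.1 hyS', hSN.1 hxS', hzS⟩ hy1 hx2
      · exact hSN.2 ⟨y, z, x, ⟨h, hSN.1 hyS', hzS, hSN.1 hxS'⟩, hyS', hxS', hzS'⟩
      · exact hSN.2 ⟨x, z, y, ⟨h, hSN.1 hxS', hzS, hSN.1 hyS'⟩, hxS', hyS', hzS'⟩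
    have hmax₁ : MaxProperSN T S S₁ := by
      refine ⟨hsn₁, hproper₁, ?_⟩
      intro S'' h'' hne'' hsub''
      rcases htri S'' h'' hne'' with h | h
      · exact Set.Subset.antisymm h hsub''
      · exact absurd (h (hsub'' hne₁)) (fun hh => hdisjS _ hne₁ hh)
    have hmax₂ : MaxProperSN T S S₂ := by
      refine ⟨hsn₂, hproper₂, ?_⟩
      intro S'' h'' hne'' hsub''
      rcases htri S'' h'' hne'' with h | h
      · exact absurd (h (hsub'' hne₂)) (fun hh => hdisjS _ hh hne₂)
      · exact Set.Subset.antisymm h hsub''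
    have hS₁₂ : S₁ ≠ S₂ := fun h => hdisjS _ hne₁ (h ▸ hne₁)
    -- subtree trees give CandidateTBR for the two sides
    have hcand : ∀ (c : VV) (Sc : Set L),
        Sc = {x | ∃ w, outdeg A w = 0 ∧ Reaches A c w ∧ lab w = x} →
        Sc ⊆ S →
        ∃ (V' : Type) (_ : Finite V') (A' : Set (V' × V')) (lab' : V' → L),
          IsTreeArcs A' ∧
          (∀ u v, outdeg A' u = 0 → outdeg A' v = 0 → lab' u = lab' v → u = v) ∧
          treeLeafSet A' lab' = Sc ∧
          ∀ t ∈ restrictT T Sc, TreeConsistentTriplet A' lab' t.1 t.2.1 t.2.2 := by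
      intro c Sc hSc hScS
      have := subtree_candidate htree lab hinj c (restrictT T Sc) ?_
      · rw [← hSc] at this
        exact this
      · rintro ⟨u, v, w⟩ ⟨htT, hu, hv, hw⟩
        have htS : (u, v, w) ∈ restrictT T S := ⟨htT, hScS hu, hScS hv, hScS hw⟩
        obtain ⟨a, b, cc, ha0, hb0, hc0, hla, hlb, hlc, hab, hac, hbc, p, q, hemb⟩ :=
          hcons _ htS
        obtain ⟨m, hma, hmb, hmc⟩ := anc_of_embedding htree hc0 hac hemb
        rw [hSc] at hu hv hw
        obtain ⟨a', ha'0, hca', hla'⟩ := hu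
        have haa : a' = a := hinj _ _ ha'0 ha0 (by rw [hla', hla])
        rw [haa] at hca'
        obtain ⟨b', hb'0, hcb', hlb'⟩ := hv
        have hbb : b' = b := hinj _ _ hb'0 hb0 (by rw [hlb', hlb])
        rw [hbb] at hcb'
        obtain ⟨c', hc'0, hcc', hlc'⟩ := hw
        have hcc : c' = cc := hinj _ _ hc'0 hc0 (by rw [hlc', hlc])
        rw [hcc] at hcc'
        exact ⟨a, b, cc, ha0, hb0, hc0, hca', hcb', hcc', hla, hlb, hlc,
          hab, hac, hbc, m, hma, hmb, hmc⟩
    obtain ⟨V₁', hfin₁', A₁', lab₁', h₁⟩ :=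
      hcand c₁ S₁ hS₁def hS₁S
    obtain ⟨V₂', hfin₂', A₂', lab₂', h₂⟩ :=
      hcand c₂ S₂ hS₂def hS₂S
    refine ⟨S₁, S₂, hS₁₂, hmax₁, hmax₂, ?_, ?_, ?_⟩
    · intro S' hS'
      rcases htri S' hS'.1 hS'.2.1 with h | h
      · exact Or.inl (hS'.2.2 S₁ hsn₁ hproper₁ h).symm
      · exact Or.inr (hS'.2.2 S₂ hsn₂ hproper₂ h).symm
    · exact ⟨sn_lift hS hsn₁, V₁', hfin₁', A₁', lab₁', h₁⟩
    · exact ⟨sn_lift hS hsn₂, V₂', hfin₂', A₂', lab₂', h₂⟩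
  · -- backward direction
    rintro (hcard | ⟨S₁, S₂, hne, hmax₁, hmax₂, huniq, hcand₁, hcand₂⟩)
    · obtain ⟨x, hx⟩ := Set.ncard_eq_one.mp hcard
      exact singleton_candidate hT hS hx
    have hdisj : ∀ x, x ∈ S₁ → x ∈ S₂ → False := by
      intro x hx₁ hx₂
      rcases sn_nested_or_disjoint hT hdense hS hmax₁.1 hmax₂.1 hx₁ hx₂ with h | h
      · exact hne (hmax₁.2.2 S₂ hmax₂.1 hmax₂.2.1 h).symm
      · exact hne (hmax₂.2.2 S₁ hmax₁.1 hmax₁.2.1 h)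
    have hSfin : S.Finite := hfin.subset hS.1
    have hunion : ∀ x ∈ S, x ∈ S₁ ∨ x ∈ S₂ := by
      intro x hx
      have hsing : ({x} : Set L) ≠ S := by
        intro h
        have h₁e : S₁ = ∅ := by
          rcases Set.subset_singleton_iff_eq.mp (h ▸ hmax₁.1.1) with he | he
          · exact he
          · exact absurd (he.trans h) hmax₁.2.1
        have h₂e : S₂ = ∅ := by
          rcases Set.subset_singleton_iff_eq.mp (h ▸ hmax₂.1.1) with he | he
          · exact he
          · exact absurd (he.trans h) hmax₂.2.1
        exact hne (h₁e.trans h₂e.symm)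
      obtain ⟨M, hM, hxM⟩ := exists_maxProper_extension hSfin S.ncard {x}
        (by omega) (snOn_singleton hT hx) hsing
      rcases huniq M hM with rfl | rfl
      · exact Or.inl (hxM rfl)
      · exact Or.inr (hxM rfl)
    obtain ⟨hsn₁', V₁, hfin₁, A₁, lab₁, ht₁, hinj₁, hleaf₁, hcons₁⟩ := hcand₁
    obtain ⟨hsn₂', V₂, hfin₂, A₂, lab₂, ht₂, hinj₂, hleaf₂, hcons₂⟩ := hcand₂
    haveI := hfin₁
    haveI := hfin₂
    have hdisj' : ∀ x, x ∈ treeLeafSet A₁ lab₁ → x ∈ treeLeafSet A₂ lab₂ → False :=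
      fun x h1 h2 => hdisj x (hleaf₁ ▸ h1) (hleaf₂ ▸ h2)
    have hcase : ∀ t ∈ restrictT T S,
        (t.1 ≠ t.2.1 ∧ t.1 ≠ t.2.2 ∧ t.2.1 ≠ t.2.2) ∧
        (TreeConsistentTriplet A₁ lab₁ t.1 t.2.1 t.2.2 ∨
         TreeConsistentTriplet A₂ lab₂ t.1 t.2.1 t.2.2 ∨
         (t.1 ∈ treeLeafSet A₁ lab₁ ∧ t.2.1 ∈ treeLeafSet A₁ lab₁ ∧
            t.2.2 ∈ treeLeafSet A₂ lab₂) ∨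
         (t.1 ∈ treeLeafSet A₂ lab₂ ∧ t.2.1 ∈ treeLeafSet A₂ lab₂ ∧
            t.2.2 ∈ treeLeafSet A₁ lab₁)) := by
      rintro ⟨x, y, z⟩ ⟨htT, hxS, hyS, hzS⟩
      have hd := hT _ htT
      refine ⟨⟨hd.2.1, hd.2.2.1, hd.2.2.2⟩, ?_⟩
      rcases hunion x hxS with hx1 | hx2 <;> rcases hunion y hyS with hy1 | hy2 <;>
        rcases hunion z hzS with hz1 | hz2
      · exact Or.inl (hcons₁ (x, y, z) ⟨htT, hx1, hy1, hz1⟩)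
      · exact Or.inr (Or.inr (Or.inl ⟨hleaf₁ ▸ hx1, hleaf₁ ▸ hy1, hleaf₂ ▸ hz2⟩))
      · exact absurd ⟨x, y, z, ⟨htT, hxS, hyS, hzS⟩, hx1, hz1,
          fun h => hdisj y h hy2⟩ hmax₁.1.2
      · exact absurd ⟨y, x, z, ⟨hd.1, hyS, hxS, hzS⟩, hy2, hz2,
          fun h => hdisj x hx1 h⟩ hmax₂.1.2
      · exact absurd ⟨y, x, z, ⟨hd.1, hyS, hxS, hzS⟩, hy1, hz1,
          fun h => hdisj x h hx2⟩ hmax₁.1.2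
      · exact absurd ⟨x, y, z, ⟨htT, hxS, hyS, hzS⟩, hx2, hz2,
          fun h => hdisj y hy1 h⟩ hmax₂.1.2
      · exact Or.inr (Or.inr (Or.inr ⟨hleaf₂ ▸ hx2, hleaf₂ ▸ hy2, hleaf₁ ▸ hz1⟩))
      · exact Or.inr (Or.inl (hcons₂ (x, y, z) ⟨htT, hx2, hy2, hz2⟩))
    obtain ⟨W, hWfin, A', lab', htree', hinj', hleaf', hcons'⟩ :=
      glue_candidate A₁ A₂ lab₁ lab₂ ht₁ ht₂ hinj₁ hinj₂ hdisj'
        (restrictT T S) hcase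
    refine ⟨hS, W, hWfin, A', lab', htree', hinj', ?_, hcons'⟩
    rw [hleaf', hleaf₁, hleaf₂]
    apply Set.Subset.antisymm
    · exact Set.union_subset hmax₁.1.1 hmax₂.1.1
    · intro x hx
      exact hunion x hx

end Phylo
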